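/- Let He_n denote the n-th probabilists' Hermite polynomial, defined by the Rodrigues-type formula He_n(x) = (−1)^n · exp(x²/2) · (d^n/dx^n) exp(−x²/2). Then for all natural numbers m ≠ n, the Hermite polynomials are orthogonal with respect to the standard Gaussian weight: ∫_ℝ He_m(x) · He_n(x) · exp(−x²/2) dx = 0. -/

import Mathlib

open MeasureTheory

/-- The `n`-th probabilists' Hermite polynomial via the Rodrigues-type formula
`He_n(x) = (−1)^n · exp(x²/2) · (d^n/dx^n) exp(−x²/2)` (Eq. 5). -/
noncomputable def He (n : ℕ) (x : ℝ) : ℝ :=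
  (-1 : ℝ) ^ n * Real.exp (x ^ 2 / 2) *
    iteratedDeriv n (fun y : ℝ => Real.exp (-y ^ 2 / 2)) x

open Polynomial in
/-- Real-coefficient version of the Hermite polynomial. -/
noncomputable def Hr (n : ℕ) : ℝ[X] := (hermite n).map (Int.castRingHom ℝ)

namespace HermiteOrth

open Polynomial

lemma Hr_eval (n : ℕ) (x : ℝ) : eval x (Hr n) = aeval x (hermite n) := by
  simp [Hr, aeval_def, eval₂_eq_eval_map, algebraMap_int_eq]

lemma Hr_succ (n : ℕ) : Hr (n + 1) = X * Hr n - derivative (Hr n) := by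
  rw [Hr, hermite_succ, Polynomial.map_sub, Polynomial.map_mul, Polynomial.map_X,
    ← derivative_map]
  rfl

lemma Hr_natDegree (n : ℕ) : (Hr n).natDegree = n := by
  rw [Hr, natDegree_map_eq_of_injective Int.cast_injective]
  exact natDegree_hermite

lemma integrable_pow_gauss (k : ℕ) :
    Integrable fun x : ℝ => x ^ k * Real.exp (-(x ^ 2 / 2)) := by
  have h := integrable_rpow_mul_exp_neg_mul_sq (b := 1/2) (by norm_num)
    (s := (k : ℝ)) (lt_of_lt_of_le neg_one_lt_zero (Nat.cast_nonneg k))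
  have : (fun x : ℝ => x ^ k * Real.exp (-(x ^ 2 / 2))) =
      fun x : ℝ => x ^ ((k : ℝ)) * Real.exp (-(1/2) * x ^ 2) := by
    funext x; rw [Real.rpow_natCast]; ring_nf
  rw [this]; exact h

lemma integrable_poly_gauss (p : ℝ[X]) :
    Integrable fun x : ℝ => eval x p * Real.exp (-(x ^ 2 / 2)) := by
  induction p using Polynomial.induction_on' with
  | add p q hp hq => exact (hp.add hq).congr (by filter_upwards with x; simp [add_mul])
  | monomial n a =>
      simpa [eval_monomial, mul_assoc] using (integrable_pow_gauss n).const_mul a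

lemma hasDerivAt_hg (n : ℕ) (x : ℝ) :
    HasDerivAt (fun x : ℝ => eval x (Hr n) * Real.exp (-(x ^ 2 / 2)))
      (-(eval x (Hr (n + 1)) * Real.exp (-(x ^ 2 / 2)))) x := by
  have h1 : HasDerivAt (fun x : ℝ => Real.exp (-(x ^ 2 / 2)))
      (-x * Real.exp (-(x ^ 2 / 2))) x := by
    have : HasDerivAt (fun x : ℝ => -(x ^ 2 / 2)) (-x) x := by
      simpa using ((hasDerivAt_pow 2 x).div_const 2).fun_neg
    simpa [mul_comm] using this.exp
  have h2 : HasDerivAt (fun x : ℝ => eval x (Hr n))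
      (eval x (derivative (Hr n))) x := (Hr n).hasDerivAt x
  have := h2.fun_mul h1
  refine this.congr_deriv ?_
  rw [Hr_succ]
  simp only [eval_sub, eval_mul, eval_X]
  ring

lemma key (n : ℕ) : ∀ p : ℝ[X],
    ∫ x : ℝ, eval x p * (eval x (Hr n) * Real.exp (-(x ^ 2 / 2))) =
    ∫ x : ℝ, eval x (derivative^[n] p) * Real.exp (-(x ^ 2 / 2)) := by
  induction n with
  | zero => intro p; simp [Hr, hermite_zero]
  | succ n ih =>
      intro p
      have hu : ∀ x : ℝ, HasDerivAt (fun x : ℝ => eval x p)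
          (eval x (derivative p)) x := fun x => p.hasDerivAt x
      have hv := hasDerivAt_hg n
      have huv' : Integrable ((fun x : ℝ => eval x p) *
          fun x : ℝ => -(eval x (Hr (n+1)) * Real.exp (-(x ^ 2 / 2)))) := by
        have := (integrable_poly_gauss (p * Hr (n+1))).neg
        apply this.congr
        filter_upwards with x
        simp only [Pi.mul_apply, Pi.neg_apply, eval_mul]; ring
      have hu'v : Integrable ((fun x : ℝ => eval x (derivative p)) *
          fun x : ℝ => eval x (Hr n) * Real.exp (-(x ^ 2 / 2))) := by
        have := integrable_poly_gauss (derivative p * Hr n)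
        apply this.congr
        filter_upwards with x
        simp only [Pi.mul_apply, eval_mul]; ring
      have huv : Integrable ((fun x : ℝ => eval x p) *
          fun x : ℝ => eval x (Hr n) * Real.exp (-(x ^ 2 / 2))) := by
        have := integrable_poly_gauss (p * Hr n)
        apply this.congr
        filter_upwards with x
        simp only [Pi.mul_apply, eval_mul]; ring
      have ibp := MeasureTheory.integral_mul_deriv_eq_deriv_mul_of_integrable
        (fun x _ => hu x) (fun x _ => hv x) huv' hu'v huv
      have h1 : ∫ x : ℝ, eval x p * -(eval x (Hr (n+1)) * Real.exp (-(x ^ 2 / 2))) =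
          -∫ x : ℝ, eval x p * (eval x (Hr (n+1)) * Real.exp (-(x ^ 2 / 2))) := by
        simp [mul_neg, integral_neg]
      rw [h1] at ibp
      have h2 : ∫ x : ℝ, eval x p * (eval x (Hr (n+1)) * Real.exp (-(x ^ 2 / 2))) =
          ∫ x : ℝ, eval x (derivative p) * (eval x (Hr n) * Real.exp (-(x ^ 2 / 2))) := by
        linarith
      rw [h2, ih (derivative p), ← Function.iterate_succ_apply]

lemma He_eq (n : ℕ) (x : ℝ) : He n x = eval x (Hr n) := by
  rw [Hr_eval, Polynomial.hermite_eq_deriv_gaussian' n x, He, iteratedDeriv_eq_iterate]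
  rw [show (fun y : ℝ => Real.exp (-y ^ 2 / 2)) = fun y : ℝ => Real.exp (-(y ^ 2 / 2)) by
    funext y; rw [neg_div]]
  ring

lemma orth_lt (m n : ℕ) (h : m < n) :
    ∫ x : ℝ, He m x * He n x * Real.exp (-x ^ 2 / 2) = 0 := by
  have : ∀ x : ℝ, He m x * He n x * Real.exp (-x ^ 2 / 2) =
      eval x (Hr m) * (eval x (Hr n) * Real.exp (-(x ^ 2 / 2))) := by
    intro x; rw [He_eq, He_eq, neg_div]; ring
  simp_rw [this]
  rw [key n (Hr m), Polynomial.iterate_derivative_eq_zero (by rw [Hr_natDegree]; exact h)]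
  simp

end HermiteOrth

/-- Orthogonality of the probabilists' Hermite polynomials with respect to the
standard Gaussian weight: for `m ≠ n`, `∫ He_m He_n e^{−x²/2} dx = 0`. -/
theorem hermite_orthogonal_gaussian
    (m n : ℕ) (hmn : m ≠ n) :
    ∫ x : ℝ, He m x * He n x * Real.exp (-x ^ 2 / 2) = 0 := by
  rcases hmn.lt_or_gt with h | h
  · exact HermiteOrth.orth_lt m n h
  · have := HermiteOrth.orth_lt n m h
    simp_rw [show ∀ x : ℝ, He m x * He n x = He n x * He m x from fun x => mul_comm _ _]
    exact this
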